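/- Let n ≥ 2 and let f : 𝔽₂ⁿ → 𝔽₂ be nested canalizing. Then f can be written in the layered form f = M₁(M₂(⋯(M_{r−1}(M_r ⊕ 1) ⊕ 1)⋯) ⊕ 1) ⊕ b, where each M_i is an extended monomial in k_i variables, the variable sets of the M_i are pairwise disjoint and together comprise all n variables, k_i ≥ 1 for i = 1,…,r−1, k_r ≥ 2, and k₁ + ⋯ + k_r = n. -/
import Mathlib


/-- `f` is nested canalizing in the variable order `σ(0), σ(1), …, σ(n-1)`
with canalizing input values `a` and canalized output values `b`:
`f x = b k` whenever `x (σ j) = a j + 1` for all `j < k` and `x (σ k) = a k`,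
and `f x = b (last) + 1` whenever `x (σ j) = a j + 1` for all `j`. -/
def IsNCF {n : ℕ} (f : (Fin n → ZMod 2) → ZMod 2) (σ : Equiv.Perm (Fin n))
    (a b : Fin n → ZMod 2) : Prop :=
  (∀ (k : Fin n) (x : Fin n → ZMod 2),
      (∀ j : Fin n, j < k → x (σ j) = a j + 1) → x (σ k) = a k → f x = b k) ∧
  (∀ k : Fin n, (∀ j : Fin n, j ≤ k) →
      ∀ x : Fin n → ZMod 2, (∀ j : Fin n, x (σ j) = a j + 1) → f x = b k + 1)

/-- The nested expression `M i * (M (i+1) * ( … * (M (i+t-1) + 1) … ) + 1)`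
with `t` factors, i.e. `nestVal M t i = Mᵢ(M_{i+1}(⋯(M_{i+t-1} ⊕ 1)⋯) ⊕ 1)`. -/
def nestVal (M : ℕ → ZMod 2) : ℕ → ℕ → ZMod 2
  | 0, _ => 0
  | 1, i => M i
  | (t + 2), i => M i * (nestVal M (t + 1) (i + 1) + 1)

/-- The extended monomial of the `i`-th layer, given the layer assignment `L`
and the complemented inputs `a`:  `Mᵢ(x) = ∏_{L j = i} (x j ⊕ a j)`. -/
def layerMon {n r : ℕ} (L : Fin n → Fin r) (a : Fin n → ZMod 2) (i : ℕ)
    (x : Fin n → ZMod 2) : ZMod 2 :=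
  ∏ j ∈ Finset.univ.filter (fun j : Fin n => (L j : ℕ) = i), (x j + a j)

/-- `kᵢ`, the number of variables in the `i`-th layer. -/
def layerSize {n r : ℕ} (L : Fin n → Fin r) (i : ℕ) : ℕ :=
  (Finset.univ.filter (fun j : Fin n => (L j : ℕ) = i)).card

/-- `K_l = k₀ + k₁ + ⋯ + k_{l-1}`, the number of variables in the first `l` layers. -/
def layerSum {n r : ℕ} (L : Fin n → Fin r) (l : ℕ) : ℕ :=
  ∑ i ∈ Finset.range l, layerSize L i

/-- `f` is given in the layered form
`f = M₁(M₂(⋯(M_{r−1}(M_r ⊕ 1) ⊕ 1)⋯) ⊕ 1) ⊕ b`, where the `Mᵢ` are extended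
monomials in pairwise disjoint sets of variables comprising all `n` variables
(the variable set of `Mᵢ` being the `i`-th layer `{j | L j = i}`), every layer
is nonempty, and the last layer has at least two variables. -/
def IsLayeredForm {n r : ℕ} (f : (Fin n → ZMod 2) → ZMod 2)
    (L : Fin n → Fin r) (a : Fin n → ZMod 2) (b : ZMod 2) : Prop :=
  1 ≤ r ∧
  (∀ i : Fin r, 1 ≤ layerSize L (i : ℕ)) ∧
  2 ≤ layerSize L (r - 1) ∧
  ∀ x : Fin n → ZMod 2, f x = nestVal (fun i => layerMon L a i x) r 0 + b

lemma zmod2_ne {u v : ZMod 2} (h : u ≠ v) : u = v + 1 := by revert h; revert u v; decide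

lemma zmod2_add11 (u : ZMod 2) : u + 1 + 1 = u := by revert u; decide

lemma zmod2_nea {u v : ZMod 2} (h : u ≠ v + 1) : u = v := by revert h; revert u v; decide

lemma zmod2_sum1 (u : ZMod 2) : u + 1 + u = 1 := by revert u; decide

lemma zmod2_self (u : ZMod 2) : u + u = 0 := by revert u; decide

lemma nest_all_one (M : ℕ → ZMod 2) :
    ∀ t i, (∀ m, m < t → M (i + m) = 1) → nestVal M t i = (t : ZMod 2) := by
  intro t
  induction t using Nat.strong_induction_on with
  | _ t ih =>
    match t with
    | 0 => intro i _; simp [nestVal]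
    | 1 => intro i h; simpa [nestVal] using h 0 (by omega)
    | (t + 2) =>
      intro i h
      have h0 : M i = 1 := by simpa using h 0 (by omega)
      have hrec : nestVal M (t + 1) (i + 1) = ((t + 1 : ℕ) : ZMod 2) := by
        refine ih (t + 1) (by omega) (i + 1) ?_
        intro m hm
        have := h (m + 1) (by omega)
        simpa [Nat.add_assoc, Nat.add_comm 1 m] using this
      show M i * (nestVal M (t + 1) (i + 1) + 1) = _
      rw [h0, hrec]
      push_cast
      ring

lemma nest_zero (M : ℕ → ZMod 2) :
    ∀ t i l, l < t → (∀ m, m < l → M (i + m) = 1) → M (i + l) = 0 →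
      nestVal M t i = (l : ZMod 2) := by
  intro t
  induction t using Nat.strong_induction_on with
  | _ t ih =>
    match t with
    | 0 => intro i l hl; omega
    | 1 =>
      intro i l hl h1 h2
      interval_cases l
      simpa [nestVal] using h2
    | (t + 2) =>
      intro i l hl h1 h2
      match l with
      | 0 =>
        show M i * (nestVal M (t + 1) (i + 1) + 1) = _
        simpa using Or.inl (by simpa using h2)
      | (l' + 1) =>
        have h0 : M i = 1 := by simpa using h1 0 (by omega)
        have hrec : nestVal M (t + 1) (i + 1) = ((l' : ℕ) : ZMod 2) := by
          refine ih (t + 1) (by omega) (i + 1) l' (by omega) ?_ ?_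
          · intro m hm
            have := h1 (m + 1) (by omega)
            simpa [Nat.add_assoc, Nat.add_comm 1 m] using this
          · simpa [Nat.add_assoc, Nat.add_comm 1 l'] using h2
        show M i * (nestVal M (t + 1) (i + 1) + 1) = _
        rw [h0, hrec]
        push_cast
        ring

lemma ncf_normalize {n : ℕ} (hn : 2 ≤ n) (f : (Fin n → ZMod 2) → ZMod 2)
    (σ : Equiv.Perm (Fin n)) (a b : Fin n → ZMod 2) (h : IsNCF f σ a b) :
    ∃ a' b' : Fin n → ZMod 2, IsNCF f σ a' b' ∧
      b' ⟨n - 1, by omega⟩ = b' ⟨n - 2, by omega⟩ := by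
  set last : Fin n := ⟨n - 1, by omega⟩ with hlast
  have hle : ∀ j : Fin n, j ≤ last := by
    intro j; rw [Fin.le_def]; have := j.isLt; simp only [hlast]; omega
  by_cases hc : b ⟨n - 1, by omega⟩ = b ⟨n - 2, by omega⟩
  · exact ⟨a, b, h, hc⟩
  · refine ⟨Function.update a last (a last + 1), Function.update b last (b last + 1), ⟨?_, ?_⟩, ?_⟩
    · intro k x hpre hk
      by_cases hkl : k = last
      · subst hkl
        rw [Function.update_self]
        have hall : ∀ j : Fin n, x (σ j) = a j + 1 := by
          intro j
          rcases eq_or_ne j last with rfl | hj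
          · simpa [Function.update_self] using hk
          · have hjlt : j < last := lt_of_le_of_ne (hle j) hj
            simpa [Function.update_of_ne hj] using hpre j hjlt
        exact h.2 last hle x hall
      · rw [Function.update_of_ne hkl]
        refine h.1 k x ?_ ?_
        · intro j hj
          have hj' : j ≠ last := by
            intro hje; subst hje; exact absurd (lt_of_lt_of_le hj (hle k)) (lt_irrefl _)
          simpa [Function.update_of_ne hj'] using hpre j hj
        · simpa [Function.update_of_ne hkl] using hk
    · intro k hk x hall
      have hkl : k = last := le_antisymm (hle k) (hk last)
      subst hkl
      have h1 : ∀ j : Fin n, j < last → x (σ j) = a j + 1 := by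
        intro j hj
        have hj' : j ≠ last := ne_of_lt hj
        simpa [Function.update_of_ne hj'] using hall j
      have h2 : x (σ last) = a last := by
        have := hall last
        rw [Function.update_self] at this
        rw [this]; exact zmod2_add11 _
      have := h.1 last x h1 h2
      rw [Function.update_self, zmod2_add11]
      exact this
    · have hne : (⟨n - 2, by omega⟩ : Fin n) ≠ last := by
        simp only [hlast, Ne, Fin.mk.injEq]; omega
      rw [Function.update_self, Function.update_of_ne hne,
        show (last : Fin n) = ⟨n - 1, by omega⟩ from rfl, zmod2_ne hc, zmod2_add11]

/-- Every nested canalizing function (n ≥ 2) can be written in the layered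
form `f = M₁(M₂(⋯(M_{r−1}(M_r ⊕ 1) ⊕ 1)⋯) ⊕ 1) ⊕ b` with extended monomials
`Mᵢ` in pairwise disjoint variable sets comprising all `n` variables, all
layers nonempty and the last layer of size at least 2. -/
theorem statement4 {n : ℕ} (hn : 2 ≤ n) (f : (Fin n → ZMod 2) → ZMod 2)
    (hf : ∃ (σ : Equiv.Perm (Fin n)) (a b : Fin n → ZMod 2), IsNCF f σ a b) :
    ∃ (r : ℕ) (L : Fin n → Fin r) (a : Fin n → ZMod 2) (b : ZMod 2),
      IsLayeredForm f L a b := by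
  obtain ⟨σ, a0, b0, h0⟩ := hf
  obtain ⟨a, b, hncf, hbb⟩ := ncf_normalize hn f σ a0 b0 h0
  set d : ℕ → ZMod 2 := fun k => b ⟨min k (n - 1), by omega⟩ with hd
  set P : ℕ → ℕ := fun k => ((Finset.range k).filter fun m => d m ≠ d (m + 1)).card with hP
  have hPmono : Monotone P := by
    intro s t hst
    exact Finset.card_le_card (Finset.filter_subset_filter _ (Finset.range_subset_range.2 hst))
  have hPstep : ∀ k, P (k + 1) = if d k ≠ d (k + 1) then P k + 1 else P k := by
    intro k
    simp only [hP, Finset.range_add_one, Finset.filter_insert]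
    split
    · rw [Finset.card_insert_of_notMem (by simp)]
    · rfl
  have hP0 : P 0 = 0 := by simp [hP]
  have hd0 : d 0 = b ⟨0, by omega⟩ := congrArg b (Fin.ext (by simp))
  have hdval : ∀ k, d k = d 0 + (P k : ZMod 2) := by
    intro k
    induction k with
    | zero => simp [hP0]
    | succ k ih =>
      rw [hPstep k]
      by_cases hc : d k ≠ d (k + 1)
      · rw [if_pos hc, zmod2_ne (Ne.symm hc), ih]
        push_cast; ring
      · rw [if_neg hc]
        push_neg at hc
        rw [← hc, ih]
  have hsurj : ∀ K, ∀ i ≤ P K, ∃ k ≤ K, P k = i := by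
    intro K
    induction K with
    | zero => intro i hi; exact ⟨0, le_rfl, by omega⟩
    | succ K ih =>
      intro i hi
      by_cases hc : i ≤ P K
      · obtain ⟨k, hk, hke⟩ := ih i hc
        exact ⟨k, by omega, hke⟩
      · refine ⟨K + 1, le_rfl, ?_⟩
        have := hPstep K
        split at this <;> omega
  have hd2 : d (n - 2) = d (n - 1) := by
    have e1 : d (n - 2) = b ⟨n - 2, by omega⟩ := congrArg b (Fin.ext (by simp; omega))
    have e2 : d (n - 1) = b ⟨n - 1, by omega⟩ := congrArg b (Fin.ext (by simp))
    rw [e1, e2, hbb]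
  have hP12 : P (n - 1) = P (n - 2) := by
    have h := hPstep (n - 2)
    rw [show n - 2 + 1 = n - 1 by omega] at h
    rw [h, if_neg (fun hne => hne hd2)]
  set r : ℕ := P (n - 1) + 1 with hr
  have hbound : ∀ j : Fin n, P ((σ.symm j : Fin n) : ℕ) < r := by
    intro j
    have h1 : ((σ.symm j : Fin n) : ℕ) ≤ n - 1 := by have := (σ.symm j).isLt; omega
    have := hPmono h1
    omega
  set L : Fin n → Fin r := fun j => ⟨P ((σ.symm j : Fin n) : ℕ), hbound j⟩ with hL
  have hLval : ∀ k : Fin n, ((L (σ k) : Fin r) : ℕ) = P (k : ℕ) := by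
    intro k
    simp [hL]
  refine ⟨r, L, fun j => a (σ.symm j), b ⟨0, by omega⟩, ?_, ?_, ?_, ?_⟩
  · omega
  · intro i
    have hi : (i : ℕ) ≤ P (n - 1) := by have := i.isLt; omega
    obtain ⟨k, hk, hke⟩ := hsurj (n - 1) (i : ℕ) hi
    refine Finset.card_pos.2 ⟨σ ⟨k, by omega⟩, ?_⟩
    rw [Finset.mem_filter]
    exact ⟨Finset.mem_univ _, by rw [hLval ⟨k, by omega⟩]; exact hke⟩
  · have hrm : r - 1 = P (n - 1) := by omega
    rw [layerSize]
    refine Finset.one_lt_card.2 ⟨σ ⟨n - 2, by omega⟩, ?_, σ ⟨n - 1, by omega⟩, ?_, ?_⟩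
    · rw [Finset.mem_filter]
      refine ⟨Finset.mem_univ _, ?_⟩
      rw [hLval ⟨n - 2, by omega⟩]
      simp only [hrm]
      exact hP12.symm
    · rw [Finset.mem_filter]
      refine ⟨Finset.mem_univ _, ?_⟩
      rw [hLval ⟨n - 1, by omega⟩]
      simp only [hrm]
    · exact σ.injective.ne (by simp only [Ne, Fin.mk.injEq]; omega)
  · intro x
    set M : ℕ → ZMod 2 := fun i => layerMon L (fun j => a (σ.symm j)) i x with hM
    have hMone : ∀ i, (∀ k : Fin n, P (k : ℕ) = i → x (σ k) = a k + 1) → M i = 1 := by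
      intro i hcompl
      simp only [hM, layerMon]
      refine Finset.prod_eq_one ?_
      intro j hj
      rw [Finset.mem_filter] at hj
      have hPj : P ((σ.symm j : Fin n) : ℕ) = i := by
        have := hj.2; simpa [hL] using this
      have hx := hcompl (σ.symm j) hPj
      rw [Equiv.apply_symm_apply] at hx
      rw [hx]
      exact zmod2_sum1 _
    have hMzero : ∀ k : Fin n, x (σ k) = a k → M (P (k : ℕ)) = 0 := by
      intro k hk
      simp only [hM, layerMon]
      refine Finset.prod_eq_zero (i := σ k) ?_ ?_
      · rw [Finset.mem_filter]
        exact ⟨Finset.mem_univ _, hLval k⟩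
      · rw [Equiv.symm_apply_apply, hk]
        exact zmod2_self _
    by_cases hex : ∃ k : Fin n, x (σ k) = a k
    · have hTne : (Finset.univ.filter fun k : Fin n => x (σ k) = a k).Nonempty := by
        obtain ⟨k, hk⟩ := hex
        exact ⟨k, Finset.mem_filter.2 ⟨Finset.mem_univ _, hk⟩⟩
      set k := Finset.min' _ hTne with hkdef
      have hkmem := Finset.min'_mem _ hTne
      rw [Finset.mem_filter] at hkmem
      have hkmin : ∀ j : Fin n, j < k → x (σ j) = a j + 1 := by
        intro j hj
        by_contra hne
        have hj2 : x (σ j) = a j := zmod2_nea hne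
        have hmem : j ∈ Finset.univ.filter fun k : Fin n => x (σ k) = a k :=
          Finset.mem_filter.2 ⟨Finset.mem_univ _, hj2⟩
        exact absurd hj (not_lt.2 (Finset.min'_le _ j hmem))
      have hfx : f x = b k := hncf.1 k x hkmin hkmem.2
      set l := P ((k : Fin n) : ℕ) with hl
      have hlr : l < r := by
        have hkle : ((k : Fin n) : ℕ) ≤ n - 1 := by have := (k : Fin n).isLt; omega
        have := hPmono hkle
        omega
      have hnv : nestVal M r 0 = (l : ZMod 2) := by
        refine nest_zero M r 0 l hlr ?_ ?_
        · intro m hm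
          rw [Nat.zero_add]
          refine hMone m ?_
          intro k' hk'
          have hk'k : k' < k := by
            by_contra hge
            push_neg at hge
            have hle2 : ((k : Fin n) : ℕ) ≤ ((k' : Fin n) : ℕ) := hge
            have := hPmono hle2
            omega
          exact hkmin k' hk'k
        · rw [Nat.zero_add]
          exact hMzero k hkmem.2
      rw [hfx, hnv]
      have hdk : d ((k : Fin n) : ℕ) = b k := by
        refine congrArg b (Fin.ext ?_)
        have := (k : Fin n).isLt
        simp
        omega
      have hv := hdval ((k : Fin n) : ℕ)
      rw [hdk, hd0] at hv
      rw [hv, ← hl]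
      ring
    · push_neg at hex
      have hall : ∀ j : Fin n, x (σ j) = a j + 1 := fun j => zmod2_ne (hex j)
      have hlastle : ∀ j : Fin n, j ≤ (⟨n - 1, by omega⟩ : Fin n) := by
        intro j; rw [Fin.le_def]; have := j.isLt; simp; omega
      have hfx : f x = b ⟨n - 1, by omega⟩ + 1 := hncf.2 ⟨n - 1, by omega⟩ hlastle x hall
      have hnv : nestVal M r 0 = (r : ZMod 2) := by
        refine nest_all_one M r 0 ?_
        intro m hm
        rw [Nat.zero_add]
        exact hMone m fun k' _ => hall k'
      rw [hfx, hnv]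
      have hdn : d (n - 1) = b ⟨n - 1, by omega⟩ := congrArg b (Fin.ext (by simp))
      have hv := hdval (n - 1)
      rw [hdn, hd0] at hv
      rw [hv, hr]
      push_cast
      ring
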